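/- For a probability vector (α_1, …, α_{k+1}) and probability distributions P_1, …, P_{k+1} on a finite alphabet X, the generalized Rényi divergence D_{ᾱ}(P_1, …, P_{k+1}) := −log ∑_{x ∈ X} ∏_{i=1}^{k+1} P_i(x)^{α_i} satisfies D_{ᾱ}(P_1, …, P_{k+1}) = min over probability distributions Q on X of ∑_{j=1}^{k+1} α_j · D(Q‖P_j), as extended reals. -/

import Mathlib

open scoped Classical BigOperators

noncomputable def shannonEntropy {X : Type*} [Fintype X] (Q : X → ℝ) : ℝ :=
  -∑ x, Q x * Real.log (Q x)

noncomputable def klDiv {X : Type*} [Fintype X] (Q P : X → ℝ) : EReal :=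
  if ∀ x, 0 < Q x → 0 < P x then
    ((∑ x, Q x * Real.log (Q x / P x) : ℝ) : EReal)
  else ⊤

noncomputable def renyiEntropy {X : Type*} [Fintype X] (α : ℝ) (P : X → ℝ) : ℝ :=
  (1 / (1 - α)) * Real.log (∑ x, P x ^ α)

noncomputable def renyiDiv {X : Type*} [Fintype X] (α : ℝ) (P1 P2 : X → ℝ) : EReal :=
  if 1 < α ∧ ¬ (∀ x, 0 < P1 x → 0 < P2 x) then ⊤
  else if ∀ x, ¬ (0 < P1 x ∧ 0 < P2 x) then ⊤
  else ((1 / (α - 1)) *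
      Real.log (∑ x, if 0 < P1 x ∧ 0 < P2 x then P1 x ^ α * P2 x ^ (1 - α) else 0) : ℝ)

def IsPMF {X : Type*} [Fintype X] (P : X → ℝ) : Prop :=
  (∀ x, 0 ≤ P x) ∧ ∑ x, P x = 1

/-- The generalized Rényi divergence `D_ᾱ(P_1,…,P_{k+1}) = -log ∑_x ∏_i P_i(x)^{α_i}`,
with the conventions `0^0 = 1`, `a^0 = 1`, and `-log 0 = +∞`. -/
noncomputable def genRenyiDiv {X : Type*} [Fintype X] {k : ℕ}
    (α : Fin (k + 1) → ℝ) (P : Fin (k + 1) → X → ℝ) : EReal :=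
  if (∑ x, ∏ i, P i x ^ α i) = 0 then ⊤
  else ((-Real.log (∑ x, ∏ i, P i x ^ α i) : ℝ) : EReal)

-- auxiliary lemmas

lemma ereal_coe_fsum {ι : Type*} (s : Finset ι) (f : ι → ℝ) :
    ((∑ i ∈ s, f i : ℝ) : EReal) = ∑ i ∈ s, ((f i : ℝ) : EReal) :=
  map_sum (⟨⟨(fun x : ℝ => (x : EReal)), EReal.coe_zero⟩, EReal.coe_add⟩ : ℝ →+ EReal) f s

lemma ereal_sum_ne_bot {ι : Type*} (s : Finset ι) (f : ι → EReal)
    (h : ∀ i ∈ s, f i ≠ ⊥) : ∑ i ∈ s, f i ≠ ⊥ := by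
  classical
  induction s using Finset.induction_on with
  | empty => simp
  | @insert a t hx ih =>
    rw [Finset.sum_insert hx]
    rw [Ne, EReal.add_eq_bot_iff]
    push_neg
    exact ⟨h a (Finset.mem_insert_self a t),
      ih fun i hi => h i (Finset.mem_insert_of_mem hi)⟩

lemma ereal_sum_eq_top {ι : Type*} (s : Finset ι) (f : ι → EReal)
    (h : ∀ i ∈ s, f i ≠ ⊥) {i : ι} (hi : i ∈ s) (ht : f i = ⊤) :
    ∑ j ∈ s, f j = ⊤ := by
  classical
  rw [← Finset.add_sum_erase s f hi, ht]
  exact EReal.top_add_of_ne_bot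
    (ereal_sum_ne_bot _ _ fun j hj => h j (Finset.mem_of_mem_erase hj))

lemma rpow_pos_of_nonneg {p a : ℝ} (hp : 0 ≤ p) (h : ¬ (p = 0 ∧ a ≠ 0)) :
    0 < p ^ a := by
  rcases hp.lt_or_eq with hp' | hp'
  · exact Real.rpow_pos_of_pos hp' a
  · push_neg at h
    rw [← hp', (h hp'.symm)]
    norm_num

-- klDiv is never ⊥, and terms are never ⊥
lemma klDiv_ne_bot {X : Type*} [Fintype X] (Q P : X → ℝ) : klDiv Q P ≠ ⊥ := by
  unfold klDiv; split <;> simp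

lemma term_ne_bot {X : Type*} [Fintype X] (Q P : X → ℝ) {a : ℝ} (ha : 0 ≤ a) :
    ((a : ℝ) : EReal) * klDiv Q P ≠ ⊥ := by
  unfold klDiv; split
  · simp [← EReal.coe_mul]
  · rcases ha.lt_or_eq with h | h
    · rw [EReal.coe_mul_top_of_pos h]; simp
    · rw [← h]; simp [EReal.zero_mul]

/-- Gibbs' inequality. -/
lemma gibbs {X : Type*} [Fintype X] (Q S : X → ℝ) (hQ : IsPMF Q)
    (hS0 : ∀ x, 0 ≤ S x) (hpos : ∀ x, 0 < Q x → 0 < S x) :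
    -Real.log (∑ x, S x) ≤ ∑ x, Q x * Real.log (Q x / S x) := by
  classical
  set T : Finset X := Finset.univ.filter (fun x => 0 < Q x) with hT
  have hmemT : ∀ x, x ∈ T ↔ 0 < Q x := by
    intro x; simp [hT]
  have hQ0 : ∀ x, x ∉ T → Q x = 0 := by
    intro x hx
    have := (hQ.1 x)
    rcases this.lt_or_eq with h | h
    · exact absurd ((hmemT x).2 h) hx
    · exact h.symm
  have hQT : ∑ x ∈ T, Q x = 1 := by
    rw [← hQ.2]
    exact Finset.sum_subset (Finset.subset_univ T)
      (fun x _ hx => hQ0 x hx)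
  have hTne : T.Nonempty := by
    by_contra h
    rw [Finset.not_nonempty_iff_eq_empty] at h
    rw [h] at hQT; simp at hQT
  -- restrict the RHS sum to T
  have hsum : ∑ x, Q x * Real.log (Q x / S x) = ∑ x ∈ T, Q x * Real.log (Q x / S x) := by
    refine (Finset.sum_subset (Finset.subset_univ T) (fun x _ hx => ?_)).symm
    rw [hQ0 x hx]; ring
  rw [hsum]
  -- Jensen
  have hjensen : ∑ x ∈ T, Q x • Real.log (S x / Q x)
      ≤ Real.log (∑ x ∈ T, Q x • (S x / Q x)) := by
    refine (StrictConcaveOn.concaveOn strictConcaveOn_log_Ioi).le_map_sum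
      (fun x hx => (hQ.1 x)) hQT (fun x hx => ?_)
    have hq := (hmemT x).1 hx
    exact Set.mem_Ioi.2 (div_pos (hpos x hq) hq)
  have hST : ∑ x ∈ T, Q x • (S x / Q x) = ∑ x ∈ T, S x := by
    refine Finset.sum_congr rfl fun x hx => ?_
    have hq := (hmemT x).1 hx
    rw [smul_eq_mul]; field_simp [hq.ne']
  have hSTpos : 0 < ∑ x ∈ T, S x := by
    refine Finset.sum_pos (fun x hx => hpos x ((hmemT x).1 hx)) hTne
  have hle : Real.log (∑ x ∈ T, S x) ≤ Real.log (∑ x, S x) := by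
    refine Real.log_le_log hSTpos ?_
    exact Finset.sum_le_sum_of_subset_of_nonneg (Finset.subset_univ T)
      (fun x _ _ => hS0 x)
  have hflip : ∑ x ∈ T, Q x * Real.log (Q x / S x)
      = -∑ x ∈ T, Q x • Real.log (S x / Q x) := by
    rw [← Finset.sum_neg_distrib]
    refine Finset.sum_congr rfl fun x hx => ?_
    have hq := (hmemT x).1 hx
    have hs := hpos x hq
    rw [smul_eq_mul, Real.log_div hs.ne' hq.ne', Real.log_div hq.ne' hs.ne']
    ring
  rw [hflip]
  rw [hST] at hjensen
  linarith

/-- Combining the weighted KL sums. -/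
lemma key_sum {X : Type*} [Fintype X] {k : ℕ}
    (α : Fin (k + 1) → ℝ) (hα0 : ∀ i, 0 ≤ α i) (hα1 : ∑ i, α i = 1)
    (P : Fin (k + 1) → X → ℝ) (hP : ∀ i, IsPMF (P i))
    (Q : X → ℝ) (hQ : IsPMF Q)
    (hsupp : ∀ j, 0 < α j → ∀ x, 0 < Q x → 0 < P j x) :
    ∑ j, α j * (∑ x, Q x * Real.log (Q x / P j x))
      = ∑ x, Q x * Real.log (Q x / ∏ i, P i x ^ α i) := by
  classical
  simp_rw [Finset.mul_sum]
  rw [Finset.sum_comm]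
  refine Finset.sum_congr rfl fun x _ => ?_
  rcases (hQ.1 x).lt_or_eq with hq | hq
  · -- Q x > 0
    have hSx : ∀ i, 0 < P i x ^ α i := by
      intro i
      refine rpow_pos_of_nonneg ((hP i).1 x) ?_
      rintro ⟨h0, hne⟩
      have hαi : 0 < α i := (hα0 i).lt_of_ne (Ne.symm hne)
      have := hsupp i hαi x hq
      rw [h0] at this; exact lt_irrefl 0 this
    have hprod : 0 < ∏ i, P i x ^ α i := Finset.prod_pos fun i _ => hSx i
    have hlogprod : Real.log (∏ i, P i x ^ α i) = ∑ i, α i * Real.log (P i x) := by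
      rw [Real.log_prod (fun i _ => (hSx i).ne')]
      refine Finset.sum_congr rfl fun i _ => ?_
      rcases (hα0 i).lt_or_eq with hαi | hαi
      · have hPi : 0 < P i x := hsupp i hαi x hq
        rw [Real.log_rpow hPi]
      · rw [← hαi]; simp
    have hterm : ∀ j, α j * (Q x * Real.log (Q x / P j x))
        = α j * (Q x * (Real.log (Q x) - Real.log (P j x))) := by
      intro j
      rcases (hα0 j).lt_or_eq with hαj | hαj
      · have hPj : 0 < P j x := hsupp j hαj x hq
        rw [Real.log_div hq.ne' hPj.ne']
      · rw [← hαj]; ring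
    calc ∑ j, α j * (Q x * Real.log (Q x / P j x))
        = ∑ j, α j * (Q x * (Real.log (Q x) - Real.log (P j x))) := by
          exact Finset.sum_congr rfl fun j _ => hterm j
      _ = Q x * (Real.log (Q x) * (∑ j, α j) - ∑ j, α j * Real.log (P j x)) := by
          simp only [mul_sub, Finset.mul_sum, Finset.sum_mul, ← Finset.sum_sub_distrib]
          exact Finset.sum_congr rfl fun j _ => by ring
      _ = Q x * (Real.log (Q x) - Real.log (∏ i, P i x ^ α i)) := by
          rw [hα1, hlogprod]; ring_nf
      _ = Q x * Real.log (Q x / ∏ i, P i x ^ α i) := by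
          rw [Real.log_div hq.ne' hprod.ne']
  · -- Q x = 0
    rw [← hq]
    simp


lemma ereal_sum_kl {X : Type*} [Fintype X] {k : ℕ}
    (α : Fin (k + 1) → ℝ) (hα0 : ∀ i, 0 ≤ α i)
    (P : Fin (k + 1) → X → ℝ) (Q : X → ℝ)
    (hsupp : ∀ j, 0 < α j → ∀ x, 0 < Q x → 0 < P j x) :
    ∑ j, ((α j : ℝ) : EReal) * klDiv Q (P j)
      = ((∑ j, α j * (∑ x, Q x * Real.log (Q x / P j x)) : ℝ) : EReal) := by
  rw [ereal_coe_fsum]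
  refine Finset.sum_congr rfl fun j _ => ?_
  rcases (hα0 j).lt_or_eq with hαj | hαj
  · have h : klDiv Q (P j) = ((∑ x, Q x * Real.log (Q x / P j x) : ℝ) : EReal) := by
      unfold klDiv
      rw [if_pos (hsupp j hαj)]
    rw [h, ← EReal.coe_mul]
  · rw [← hαj]
    simp [EReal.zero_mul]

theorem gen_renyi_div_char {X : Type*} [Fintype X] {k : ℕ}
    (α : Fin (k + 1) → ℝ) (hα0 : ∀ i, 0 ≤ α i) (hα1 : ∑ i, α i = 1)
    (P : Fin (k + 1) → X → ℝ) (hP : ∀ i, IsPMF (P i)) :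
    IsLeast {v : EReal | ∃ Q : X → ℝ, IsPMF Q ∧
        v = ∑ j, ((α j : ℝ) : EReal) * klDiv Q (P j)}
      (genRenyiDiv α P) := by
  classical
  set Z : ℝ := ∑ x, ∏ i, P i x ^ α i with hZdef
  have hS0 : ∀ x, 0 ≤ ∏ i, P i x ^ α i := fun x =>
    Finset.prod_nonneg fun i _ => Real.rpow_nonneg ((hP i).1 x) _
  have hZ0 : 0 ≤ Z := Finset.sum_nonneg fun x _ => hS0 x
  by_cases hZ : Z = 0
  · -- Z = 0 : everything is ⊤
    have hall : ∀ Q : X → ℝ, IsPMF Q →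
        ∑ j, ((α j : ℝ) : EReal) * klDiv Q (P j) = ⊤ := by
      intro Q hQ
      obtain ⟨x, hx⟩ : ∃ x, 0 < Q x := by
        by_contra h
        push_neg at h
        have h0 : ∑ x, Q x = 0 :=
          Finset.sum_eq_zero fun x _ => le_antisymm (h x) (hQ.1 x)
        rw [hQ.2] at h0; norm_num at h0
      have hSx : ∏ i, P i x ^ α i = 0 :=
        (Finset.sum_eq_zero_iff_of_nonneg (fun x _ => hS0 x)).1 hZ x (Finset.mem_univ x)
      obtain ⟨i, -, hi⟩ := Finset.prod_eq_zero_iff.1 hSx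
      have hPi0 : P i x = 0 ∧ α i ≠ 0 := by
        by_contra h
        exact (rpow_pos_of_nonneg ((hP i).1 x) h).ne' hi
      have hαi : 0 < α i := (hα0 i).lt_of_ne (Ne.symm hPi0.2)
      have htop : klDiv Q (P i) = ⊤ := by
        unfold klDiv
        rw [if_neg]
        push_neg
        exact ⟨x, hx, by rw [hPi0.1]⟩
      refine ereal_sum_eq_top _ _ (fun j _ => term_ne_bot _ _ (hα0 j))
        (Finset.mem_univ i) ?_
      rw [htop, EReal.coe_mul_top_of_pos hαi]
    have hgen : genRenyiDiv α P = ⊤ := by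
      simp only [genRenyiDiv]
      rw [← hZdef, if_pos hZ]
    constructor
    · exact ⟨P 0, hP 0, by rw [hall (P 0) (hP 0), hgen]⟩
    · rintro v ⟨Q, hQ, rfl⟩
      rw [hall Q hQ]
      exact le_top
  · -- Z > 0
    have hZpos : 0 < Z := hZ0.lt_of_ne (Ne.symm hZ)
    have hgen : genRenyiDiv α P = ((-Real.log Z : ℝ) : EReal) := by
      simp only [genRenyiDiv]
      rw [← hZdef, if_neg hZ]
    constructor
    · -- membership with Q* = S / Z
      set Qs : X → ℝ := fun x => (∏ i, P i x ^ α i) / Z with hQs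
      have hQspmf : IsPMF Qs := by
        constructor
        · intro x
          exact div_nonneg (hS0 x) hZ0
        · simp only [hQs]
          rw [← Finset.sum_div, ← hZdef, div_self hZ]
      have hSpos : ∀ x, 0 < Qs x → 0 < ∏ i, P i x ^ α i := by
        intro x hqx
        have h := mul_pos hqx hZpos
        simp only [hQs] at h
        rwa [div_mul_cancel₀ _ hZ] at h
      have hsupp : ∀ j, 0 < α j → ∀ x, 0 < Qs x → 0 < P j x := by
        intro j hαj x hqx
        have hSx := hSpos x hqx
        have hfac : P j x ^ α j ≠ 0 :=
          Finset.prod_ne_zero_iff.1 hSx.ne' j (Finset.mem_univ j)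
        by_contra h
        push_neg at h
        have hP0 : P j x = 0 := le_antisymm h ((hP j).1 x)
        rw [hP0, Real.zero_rpow hαj.ne'] at hfac
        exact hfac rfl
      refine ⟨Qs, hQspmf, ?_⟩
      rw [hgen, ereal_sum_kl α hα0 P Qs hsupp, EReal.coe_eq_coe_iff,
        key_sum α hα0 hα1 P hP Qs hQspmf hsupp]
      symm
      calc ∑ x, Qs x * Real.log (Qs x / ∏ i, P i x ^ α i)
          = ∑ x, Qs x * (-Real.log Z) := by
            refine Finset.sum_congr rfl fun x _ => ?_
            rcases (hQspmf.1 x).lt_or_eq with hq | hq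
            · have hSx := hSpos x hq
              congr 1
              have hdiv : Qs x / (∏ i, P i x ^ α i) = Z⁻¹ := by
                simp only [hQs]
                field_simp
              rw [hdiv, Real.log_inv]
            · rw [← hq]; ring
        _ = Real.log Z⁻¹ := by
            rw [← Finset.sum_mul, hQspmf.2, one_mul, Real.log_inv]
        _ = -Real.log Z := Real.log_inv Z
    · -- lower bound
      rintro v ⟨Q, hQ, rfl⟩
      by_cases hc : ∀ j, 0 < α j → ∀ x, 0 < Q x → 0 < P j x
      · rw [hgen, ereal_sum_kl α hα0 P Q hc, EReal.coe_le_coe_iff,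
          key_sum α hα0 hα1 P hP Q hQ hc]
        rw [hZdef]
        refine gibbs Q _ hQ hS0 ?_
        intro x hx
        refine Finset.prod_pos fun i _ => rpow_pos_of_nonneg ((hP i).1 x) ?_
        rintro ⟨h0, hne⟩
        have hαi := (hα0 i).lt_of_ne (Ne.symm hne)
        have := hc i hαi x hx
        rw [h0] at this
        exact lt_irrefl 0 this
      · push_neg at hc
        obtain ⟨j, hαj, x, hqx, hpj⟩ := hc
        have htop : klDiv Q (P j) = ⊤ := by
          unfold klDiv
          rw [if_neg]
          push_neg
          exact ⟨x, hqx, hpj⟩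
        have hsum : ∑ j, ((α j : ℝ) : EReal) * klDiv Q (P j) = ⊤ := by
          refine ereal_sum_eq_top _ _ (fun i _ => term_ne_bot _ _ (hα0 i))
            (Finset.mem_univ j) ?_
          rw [htop, EReal.coe_mul_top_of_pos hαj]
        rw [hsum]
        exact le_top
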